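/- Let k be a field, let n ≥ 0, let f ∈ k[x_0, x_1, …, x_n] be a nonzero polynomial, and let d_1, …, d_n be positive integers such that the weight function w(b_0, b_1, …, b_n) = b_0 + d_1 b_1 + … + d_n b_n is injective on the support of f (the set of exponent vectors of monomials of f with nonzero coefficient). Then the total degree of the substituted polynomial f' = f(x_0, x_1 + x_0^{d_1}, …, x_n + x_0^{d_n}) equals max { w(b) : b ∈ supp(f) }. -/

import Mathlib

open MvPolynomial

lemma aux_natDegree_aeval_le {σ : Type*} {R : Type*} [CommRing R]
    (g : σ → Polynomial R) (hg : ∀ i, (g i).natDegree ≤ 1) (p : MvPolynomial σ R) :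
    (aeval g p).natDegree ≤ p.totalDegree := by
  conv_lhs => rw [p.as_sum]
  rw [map_sum]
  apply Polynomial.natDegree_sum_le_of_forall_le
  intro b hb
  rw [aeval_monomial]
  refine (Polynomial.natDegree_mul_le).trans ?_
  have h1 : (algebraMap R (Polynomial R) (coeff b p)).natDegree = 0 :=
    Polynomial.natDegree_C _
  rw [h1, zero_add, Finsupp.prod]
  refine (Polynomial.natDegree_prod_le _ _).trans ?_
  refine le_trans ?_ (Finset.le_sup (f := fun s : σ →₀ ℕ => s.sum fun _ e => e) hb)
  refine Finset.sum_le_sum fun i _ => ?_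
  refine (Polynomial.natDegree_pow_le).trans ?_
  calc b i * (g i).natDegree ≤ b i * 1 := Nat.mul_le_mul_left _ (hg i)
    _ = b i := mul_one _

/-- **Degree after the nonlinear change of coordinates.** Let `f ∈ k[x_0, …, x_n]` be nonzero and
`d 1, …, d n` positive integers such that the weight `w b = b 0 + ∑ i, d i * b i.succ` is
injective on the support of `f`. Then the total degree of
`f' = f (x_0, x_1 + x_0^{d 1}, …, x_n + x_0^{d n})` equals `max { w b : b ∈ supp f }`. -/
theorem totalDegree_subst_eq_sup_weight
    (k : Type*) [Field k] (n : ℕ) (f : MvPolynomial (Fin (n + 1)) k) (hf : f ≠ 0)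
    (d : Fin n → ℕ) (hd : ∀ i, 0 < d i)
    (hw : Set.InjOn (fun b : Fin (n + 1) →₀ ℕ => b 0 + ∑ i : Fin n, d i * b i.succ)
      ↑f.support) :
    (aeval (Fin.cases (X 0) (fun j : Fin n => X j.succ + X 0 ^ d j) :
        Fin (n + 1) → MvPolynomial (Fin (n + 1)) k) f).totalDegree =
      f.support.sup (fun b => b 0 + ∑ i : Fin n, d i * b i.succ) := by
  set w : (Fin (n + 1) →₀ ℕ) → ℕ :=
    fun b => b 0 + ∑ i : Fin n, d i * b i.succ with hwdef
  set g : Fin (n + 1) → MvPolynomial (Fin (n + 1)) k :=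
    Fin.cases (X 0) (fun j : Fin n => X j.succ + X 0 ^ d j) with hgdef
  set W : ℕ := f.support.sup w with hWdef
  -- degree bounds for the substituted variables
  have hgdeg : ∀ i : Fin (n + 1), (g i).totalDegree ≤ Fin.cases 1 d i := by
    intro i
    induction i using Fin.cases with
    | zero => simp [hgdef, totalDegree_X]
    | succ j =>
      simp only [hgdef, Fin.cases_succ]
      refine (totalDegree_add _ _).trans ?_
      rw [totalDegree_X, totalDegree_X_pow]
      exact max_le (hd j) le_rfl
  -- per-monomial upper bound
  have key_mono : ∀ (b : Fin (n + 1) →₀ ℕ) (c : k),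
      (aeval g (monomial b c)).totalDegree ≤ w b := by
    intro b c
    rw [aeval_monomial]
    refine (totalDegree_mul _ _).trans ?_
    have h1 : (algebraMap k (MvPolynomial (Fin (n + 1)) k) c).totalDegree = 0 := by
      rw [MvPolynomial.algebraMap_eq]; exact totalDegree_C _
    rw [h1, zero_add, Finsupp.prod_fintype _ _ (fun i => pow_zero _)]
    refine (totalDegree_finset_prod _ _).trans ?_
    have step : ∀ i : Fin (n + 1), (g i ^ b i).totalDegree ≤ b i * Fin.cases 1 d i :=
      fun i => (totalDegree_pow _ _).trans (Nat.mul_le_mul_left _ (hgdeg i))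
    calc ∑ i : Fin (n + 1), (g i ^ b i).totalDegree
        ≤ ∑ i : Fin (n + 1), b i * Fin.cases 1 d i :=
          Finset.sum_le_sum fun i _ => step i
      _ = w b := by
          rw [Fin.sum_univ_succ]
          simp only [Fin.cases_zero, Fin.cases_succ, mul_one, hwdef]
          congr 1
          exact Finset.sum_congr rfl fun j _ => mul_comm _ _
  -- upper bound
  have hub : (aeval g f).totalDegree ≤ W := by
    conv_lhs => rw [f.as_sum]
    rw [map_sum]
    refine totalDegree_finsetSum_le fun b hb => ?_
    exact (key_mono b _).trans (Finset.le_sup hb)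
  -- lower bound via projection to one variable
  set h : Fin (n + 1) → Polynomial k :=
    Fin.cases Polynomial.X (fun j : Fin n => Polynomial.X ^ d j) with hhdef
  set ψ : MvPolynomial (Fin (n + 1)) k →ₐ[k] Polynomial k :=
    aeval (Fin.cases Polynomial.X (fun _ : Fin n => 0)) with hψdef
  have hψdeg : ∀ i : Fin (n + 1),
      ((Fin.cases Polynomial.X (fun _ : Fin n => 0) : Fin (n+1) → Polynomial k) i).natDegree ≤ 1 := by
    intro i
    induction i using Fin.cases with
    | zero => simp
    | succ j => simp
  have hcompHom : ψ.comp (aeval g) = (aeval h : MvPolynomial (Fin (n+1)) k →ₐ[k] Polynomial k) := by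
    ext i
    induction i using Fin.cases with
    | zero => simp [hgdef, hhdef, hψdef]
    | succ j => simp [hgdef, hhdef, hψdef]
  have hcomp : ψ (aeval g f) = aeval h f := by
    rw [← AlgHom.comp_apply, hcompHom]
  have hmono2 : ∀ (b : Fin (n + 1) →₀ ℕ) (c : k),
      aeval h (monomial b c) = Polynomial.C c * Polynomial.X ^ w b := by
    intro b c
    rw [aeval_monomial, Finsupp.prod_fintype _ _ (fun i => pow_zero _), Fin.prod_univ_succ]
    simp only [hhdef, Fin.cases_zero, Fin.cases_succ, ← pow_mul]
    rw [Finset.prod_pow_eq_pow_sum, ← pow_add, hwdef]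
    rfl
  obtain ⟨b0, hb0mem, hb0⟩ := Finset.exists_mem_eq_sup f.support
    (Finset.nonempty_iff_ne_empty.mpr (fun hs => hf (MvPolynomial.support_eq_empty.mp hs))) w
  have hcoeff : (aeval h f).coeff W = coeff b0 f := by
    conv_lhs => rw [f.as_sum, map_sum]
    rw [Polynomial.finset_sum_coeff, Finset.sum_eq_single b0]
    · rw [hmono2, Polynomial.coeff_C_mul, Polynomial.coeff_X_pow, if_pos (by rw [hWdef, hb0]), mul_one]
    · intro b hb hne
      rw [hmono2, Polynomial.coeff_C_mul, Polynomial.coeff_X_pow, if_neg, mul_zero]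
      intro heq
      exact hne (hw hb hb0mem (by rw [← heq, hWdef, hb0]))
    · intro habs; exact absurd hb0mem habs
  have hne0 : (aeval h f).coeff W ≠ 0 := by
    rw [hcoeff]; exact mem_support_iff.mp hb0mem
  have hlb : W ≤ (aeval g f).totalDegree := by
    calc W ≤ (aeval h f).natDegree := Polynomial.le_natDegree_of_ne_zero hne0
      _ = (ψ (aeval g f)).natDegree := by rw [hcomp]
      _ ≤ (aeval g f).totalDegree := aux_natDegree_aeval_le _ hψdeg _
  exact le_antisymm hub hlb
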